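/- Let H be a complex Hilbert space and let A, B be positive bounded linear operators on H with A ≠ 0 and B ≠ 0. Suppose D is a Moore–Penrose inverse of A + B. Then the parallel sum satisfies the norm bound ‖A∘D∘B‖ ≤ (‖A‖·‖B‖)/(‖A‖ + ‖B‖), where ‖·‖ is the operator norm. -/

import Mathlib

open ContinuousLinearMap

variable {H : Type*} [NormedAddCommGroup H] [InnerProductSpace ℂ H] [CompleteSpace H]

/-- `X` is a Moore–Penrose inverse of `T`. -/
def IsMPInv (T X : H →L[ℂ] H) : Prop :=
  T ∘L X ∘L T = T ∧ X ∘L T ∘L X = X ∧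
    adjoint (T ∘L X) = T ∘L X ∧ adjoint (X ∘L T) = X ∘L T

open RCLike
open scoped InnerProductSpace ComplexConjugate

/-- For a self-adjoint operator, the real part of the quadratic-type form is symmetric. -/
lemma re_inner_symm_of_sa {A : H →L[ℂ] H} (hA : adjoint A = A) (u v : H) :
    re ⟪A u, v⟫_ℂ = re ⟪A v, u⟫_ℂ := by
  conv_lhs => rw [← hA]
  rw [adjoint_inner_left]
  exact inner_re_symm u (A v)

/-- Cauchy–Schwarz for the semi-inner product induced by a positive operator. -/
lemma cs_pos {A : H →L[ℂ] H} (hA : A.IsPositive) (x y : H) :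
    (re ⟪A x, y⟫_ℂ)^2 ≤ re ⟪A x, x⟫_ℂ * re ⟪A y, y⟫_ℂ := by
  have hsa : adjoint A = A := isSelfAdjoint_iff'.mp hA.isSelfAdjoint
  have key : ∀ s : ℝ, 0 ≤ re ⟪A y, y⟫_ℂ * (s*s) + (2 * re ⟪A x, y⟫_ℂ) * s + re ⟪A x, x⟫_ℂ := by
    intro s
    have h0 := hA.2 (x + (s:ℂ) • y)
    rw [reApplyInnerSelf_apply] at h0
    have hexp : re ⟪A (x + (s:ℂ) • y), x + (s:ℂ) • y⟫_ℂ
        = re ⟪A y, y⟫_ℂ * (s*s) + (2 * re ⟪A x, y⟫_ℂ) * s + re ⟪A x, x⟫_ℂ := by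
      rw [map_add, inner_add_left, inner_add_right, inner_add_right, map_smul,
        inner_smul_left, inner_smul_right, inner_smul_left, inner_smul_right]
      simp only [RCLike.re_to_complex, Complex.add_re, Complex.mul_re, Complex.conj_re,
        Complex.conj_im, Complex.ofReal_re, Complex.ofReal_im]
      have h3 : (⟪A y, x⟫_ℂ).re = (⟪A x, y⟫_ℂ).re := by
        have := re_inner_symm_of_sa hsa y x
        simpa using this
      rw [h3]; ring
    rw [hexp] at h0
    exact h0
  have h2 := discrim_le_zero key
  rw [discrim] at h2
  nlinarith [h2]

/-- A quadratic-form bound for a self-adjoint operator yields a norm bound. -/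
lemma norm_le_of_form {S : H →L[ℂ] H} (hS : adjoint S = S) {c : ℝ} (hc : 0 ≤ c)
    (h : ∀ x, |re ⟪S x, x⟫_ℂ| ≤ c * ‖x‖^2) : ‖S‖ ≤ c := by
  have pol : ∀ u v : H, re ⟪S u, v⟫_ℂ ≤ c / 2 * (‖u‖^2 + ‖v‖^2) := by
    intro u v
    have e : 4 * re ⟪S u, v⟫_ℂ = re ⟪S (u+v), u+v⟫_ℂ - re ⟪S (u-v), u-v⟫_ℂ := by
      have h3 : re ⟪S v, u⟫_ℂ = re ⟪S u, v⟫_ℂ := re_inner_symm_of_sa hS v u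
      rw [map_add, map_sub, inner_add_left, inner_add_right, inner_add_right,
        inner_sub_left, inner_sub_right, inner_sub_right]
      simp only [map_add, map_sub]
      linarith [h3]
    have par : ‖u+v‖^2 + ‖u-v‖^2 = 2*(‖u‖^2+‖v‖^2) := by
      have := parallelogram_law_with_norm ℂ u v
      nlinarith [this]
    have b1 := h (u+v)
    have b2 := h (u-v)
    have l1 : re ⟪S (u+v), u+v⟫_ℂ ≤ c * ‖u+v‖^2 := le_trans (le_abs_self _) b1
    have l2 : -(c * ‖u-v‖^2) ≤ re ⟪S (u-v), u-v⟫_ℂ := neg_le_of_abs_le b2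
    nlinarith [l1, l2, e, par]
  apply opNorm_le_bound S hc
  intro x
  by_cases hSx : S x = 0
  · rw [hSx]; simp; positivity
  · have hx : x ≠ 0 := by rintro rfl; simp at hSx
    have hnx : (0:ℝ) < ‖x‖ := norm_pos_iff.mpr hx
    have hnSx : (0:ℝ) < ‖S x‖ := norm_pos_iff.mpr hSx
    set t : ℝ := Real.sqrt (‖S x‖ / ‖x‖) with ht
    have ht0 : 0 < t := Real.sqrt_pos.mpr (by positivity)
    have ht2 : t^2 = ‖S x‖ / ‖x‖ := Real.sq_sqrt (by positivity)
    have key := pol ((t:ℂ) • x) ((t⁻¹:ℂ) • S x)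
    have lhs_eq : re ⟪S ((t:ℂ) • x), (t⁻¹:ℂ) • S x⟫_ℂ = ‖S x‖^2 := by
      rw [map_smul, inner_smul_left, inner_smul_right, Complex.conj_ofReal, ← mul_assoc]
      have h1 : (t:ℂ) * (↑t)⁻¹ = 1 := mul_inv_cancel₀ (by exact_mod_cast ht0.ne')
      rw [h1, one_mul, inner_self_eq_norm_sq]
    have n1 : ‖(t:ℂ) • x‖^2 = t^2 * ‖x‖^2 := by
      rw [norm_smul]; simp [abs_of_pos ht0]; ring
    have n2 : ‖(t⁻¹:ℂ) • S x‖^2 = t⁻¹^2 * ‖S x‖^2 := by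
      rw [norm_smul]; simp [abs_of_pos ht0]; ring
    rw [lhs_eq, n1, n2] at key
    have ht2' : t⁻¹^2 = ‖x‖ / ‖S x‖ := by
      rw [inv_pow, ht2]; field_simp
    rw [ht2, ht2'] at key
    have key2 : ‖S x‖^2 ≤ c * (‖x‖ * ‖S x‖) := by
      have : ‖S x‖ / ‖x‖ * ‖x‖^2 + ‖x‖ / ‖S x‖ * ‖S x‖^2 = 2 * (‖x‖ * ‖S x‖) := by
        field_simp; ring
      rw [this] at key; linarith
    nlinarith [key2, hnSx]

/-- `re ⟪M ((s:ℂ) • u), (s:ℂ) • u⟫ = s ^ 2 * re ⟪M u, u⟫` for a real scalar `s`. -/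
lemma re_inner_smul_smul (M : H →L[ℂ] H) (s : ℝ) (u : H) :
    re ⟪M ((s:ℂ) • u), (s:ℂ) • u⟫_ℂ = s^2 * re ⟪M u, u⟫_ℂ := by
  rw [map_smul, inner_smul_left, inner_smul_right, Complex.conj_ofReal, ← mul_assoc,
    ← Complex.ofReal_mul]
  simp only [RCLike.re_to_complex, Complex.mul_re, Complex.ofReal_re, Complex.ofReal_im]
  ring

set_option maxHeartbeats 1000000 in
/-- Norm bound for the parallel sum of positive operators:
`‖A : B‖ ≤ ‖A‖ ‖B‖ / (‖A‖ + ‖B‖)`. -/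
theorem norm_parallel_sum_le (A B D : H →L[ℂ] H) (hA : A.IsPositive) (hB : B.IsPositive)
    (hA0 : A ≠ 0) (hB0 : B ≠ 0) (hD : IsMPInv (A + B) D) :
    ‖A ∘L D ∘L B‖ ≤ ‖A‖ * ‖B‖ / (‖A‖ + ‖B‖) := by
  obtain ⟨h1, h2, h3, h4⟩ := hD
  set T : H →L[ℂ] H := A + B with hT
  have hAsa : adjoint A = A := isSelfAdjoint_iff'.mp hA.isSelfAdjoint
  have hBsa : adjoint B = B := isSelfAdjoint_iff'.mp hB.isSelfAdjoint
  have hTpos : T.IsPositive := hA.add hB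
  have hTsa : adjoint T = T := isSelfAdjoint_iff'.mp hTpos.isSelfAdjoint
  have hTapp : ∀ x, T x = A x + B x := fun x => by rw [hT]; exact ContinuousLinearMap.add_apply A B x
  -- kernel of T is contained in kernels of A and B
  have kerA : ∀ x, T x = 0 → A x = 0 := by
    intro x hx
    have hform : re ⟪A x, x⟫_ℂ = 0 := by
      have ha := hA.2 x
      have hb := hB.2 x
      rw [reApplyInnerSelf_apply] at ha hb
      have hsum : re ⟪A x, x⟫_ℂ + re ⟪B x, x⟫_ℂ = 0 := by
        have e : ⟪A x, x⟫_ℂ + ⟪B x, x⟫_ℂ = ⟪T x, x⟫_ℂ := by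
          rw [hTapp, inner_add_left]
        have e0 : ⟪T x, x⟫_ℂ = 0 := by rw [hx, inner_zero_left]
        have := congrArg re (e.trans e0)
        simpa using this
      linarith
    have hcs := cs_pos hA x (A x)
    rw [hform] at hcs
    have : (re ⟪A x, A x⟫_ℂ)^2 ≤ 0 := by simpa using hcs
    have h5 : re ⟪A x, A x⟫_ℂ = 0 := by nlinarith [this]
    rw [inner_self_eq_norm_sq] at h5
    have : ‖A x‖ = 0 := by nlinarith [h5, norm_nonneg (A x)]
    simpa using this
  set P : H →L[ℂ] H := D ∘L T with hP
  set Q : H →L[ℂ] H := T ∘L D with hQ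
  have hP_sa : adjoint P = P := h4
  have hQ_sa : adjoint Q = Q := h3
  have hTP : T ∘L P = T := by rw [hP, ← comp_assoc]; exact h1
  have hQT : Q ∘L T = T := by rw [hQ, comp_assoc]; exact h1
  have hTQ : T ∘L Q = T := by
    have := congrArg adjoint hQT
    rwa [adjoint_comp, hQ_sa, hTsa] at this
  have hAP : A ∘L P = A := by
    ext x
    have hz : T (P x - x) = 0 := by
      rw [map_sub]
      have := DFunLike.congr_fun hTP x
      simpa [comp_apply] using sub_eq_zero_of_eq this
    have := kerA _ hz
    rw [map_sub] at this
    simpa [comp_apply] using sub_eq_zero.mp this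
  have hAQ : A ∘L Q = A := by
    ext x
    have hz : T (Q x - x) = 0 := by
      rw [map_sub]
      have := DFunLike.congr_fun hTQ x
      simpa [comp_apply] using sub_eq_zero_of_eq this
    have := kerA _ hz
    rw [map_sub] at this
    simpa [comp_apply] using sub_eq_zero.mp this
  have hPA : P ∘L A = A := by
    have := congrArg adjoint hAP
    rwa [adjoint_comp, hP_sa, hAsa] at this
  have hQA : Q ∘L A = A := by
    have := congrArg adjoint hAQ
    rwa [adjoint_comp, hQ_sa, hAsa] at this
  have hTD' : T ∘L adjoint D = P := by
    have := h4
    rwa [hP, adjoint_comp, hTsa] at this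
  have hTDA : T * adjoint D * A = A := by
    calc T * adjoint D * A = (T ∘L adjoint D) ∘L A := rfl
    _ = P ∘L A := by rw [hTD']
    _ = A := hPA
  have hADT : A * D * T = A := by
    calc A * D * T = A ∘L (D ∘L T) := by rw [mul_assoc]; rfl
    _ = A := hAP
  have hkey : A * D * A = A * adjoint D * A := by
    calc A * D * A = A * D * (T * adjoint D * A) := by rw [hTDA]
    _ = (A * D * T) * (adjoint D * A) := by noncomm_ring
    _ = A * (adjoint D * A) := by rw [hADT]
    _ = A * adjoint D * A := by noncomm_ring
  have hS : A ∘L D ∘L B = A - A * D * A := by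
    have hB' : B = T - A := by rw [hT]; abel
    calc A ∘L D ∘L B = A * D * B := rfl
    _ = A * D * (T - A) := by rw [← hB']
    _ = A * D * T - A * D * A := by noncomm_ring
    _ = A - A * D * A := by rw [hADT]
  have hS_sa : adjoint (A ∘L D ∘L B) = A ∘L D ∘L B := by
    rw [hS]
    have : adjoint (A - A * D * A) = A - A * adjoint D * A := by
      rw [map_sub, hAsa]
      congr 1
      calc adjoint (A * D * A) = adjoint ((A ∘L D) ∘L A) := rfl
      _ = adjoint A ∘L (adjoint D ∘L adjoint A) := by rw [adjoint_comp, adjoint_comp]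
      _ = A * adjoint D * A := by rw [hAsa]; rw [mul_assoc]; rfl
    rw [this, ← hkey]
  -- norms
  set a : ℝ := ‖A‖ with ha
  set b : ℝ := ‖B‖ with hb
  have ha0 : 0 < a := norm_pos_iff.mpr hA0
  have hb0 : 0 < b := norm_pos_iff.mpr hB0
  have hab : 0 < a + b := by linarith
  set c : ℝ := a * b / (a + b) with hc
  have hc0 : 0 ≤ c := by positivity
  apply norm_le_of_form hS_sa hc0
  intro x
  -- set up z with T z = A x
  set z : H := D (A x) with hz
  have hTz : T z = A x := by
    have := DFunLike.congr_fun hQA x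
    exact this
  have hSx : (A ∘L D ∘L B) x = A x - A z := by
    rw [hS]
    simp [hz, ContinuousLinearMap.sub_apply, mul_apply]
  have e4 : re ⟪(A ∘L D ∘L B) x, x⟫_ℂ = re ⟪A x, x⟫_ℂ - re ⟪T z, z⟫_ℂ := by
    rw [hSx, inner_sub_left, map_sub]
    have : re ⟪A z, x⟫_ℂ = re ⟪T z, z⟫_ℂ := by
      rw [re_inner_symm_of_sa hAsa z x, ← hTz]
    rw [this]
  -- lower bound : 0 ≤ re ⟪S x, x⟫
  have hSpos : 0 ≤ re ⟪(A ∘L D ∘L B) x, x⟫_ℂ := by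
    rw [e4]
    have ht_nn : 0 ≤ re ⟪T z, z⟫_ℂ := by
      have := hTpos.2 z; rwa [reApplyInnerSelf_apply] at this
    have ha_nn : 0 ≤ re ⟪A x, x⟫_ℂ := by
      have := hA.2 x; rwa [reApplyInnerSelf_apply] at this
    have hAz_le : re ⟪A z, z⟫_ℂ ≤ re ⟪T z, z⟫_ℂ := by
      have hbz : 0 ≤ re ⟪B z, z⟫_ℂ := by
        have := hB.2 z; rwa [reApplyInnerSelf_apply] at this
      have e : re ⟪T z, z⟫_ℂ = re ⟪A z, z⟫_ℂ + re ⟪B z, z⟫_ℂ := by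
        rw [hTapp, inner_add_left]; exact map_add re _ _
      linarith
    have hcs := cs_pos hA x z
    have htz2 : re ⟪A x, z⟫_ℂ = re ⟪T z, z⟫_ℂ := by rw [← hTz]
    rw [htz2] at hcs
    -- hcs : (re⟪Tz,z⟫)^2 ≤ re⟪Ax,x⟫ * re⟪Az,z⟫
    have step : (re ⟪T z, z⟫_ℂ)^2 ≤ re ⟪A x, x⟫_ℂ * re ⟪T z, z⟫_ℂ :=
      le_trans hcs (by nlinarith [ha_nn, hAz_le])
    nlinarith [step, ht_nn]
  -- upper bound via the variational inequality with y = (a/(a+b)) • x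
  set r : ℝ := a / (a + b) with hr
  set y : H := ((r:ℝ):ℂ) • x with hy
  have key : re ⟪(A ∘L D ∘L B) x, x⟫_ℂ ≤ re ⟪A (x - y), x - y⟫_ℂ + re ⟪B y, y⟫_ℂ := by
    have hw : 0 ≤ re ⟪T (y - z), y - z⟫_ℂ := by
      have := hTpos.2 (y - z); rwa [reApplyInnerSelf_apply] at this
    have E1 : re ⟪A (x - y), x - y⟫_ℂ
        = re ⟪A x, x⟫_ℂ - 2 * re ⟪A x, y⟫_ℂ + re ⟪A y, y⟫_ℂ := by
      rw [map_sub, inner_sub_left, inner_sub_right, inner_sub_right]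
      simp only [map_sub]
      have := re_inner_symm_of_sa hAsa y x
      linarith [this]
    have E2 : re ⟪T (y - z), y - z⟫_ℂ
        = re ⟪T y, y⟫_ℂ - 2 * re ⟪A x, y⟫_ℂ + re ⟪T z, z⟫_ℂ := by
      rw [map_sub, inner_sub_left, inner_sub_right, inner_sub_right]
      simp only [map_sub]
      have e1 : re ⟪T y, z⟫_ℂ = re ⟪T z, y⟫_ℂ := re_inner_symm_of_sa hTsa y z
      have e2 : re ⟪T z, y⟫_ℂ = re ⟪A x, y⟫_ℂ := by rw [hTz]
      linarith [e1, e2]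
    have E3 : re ⟪T y, y⟫_ℂ = re ⟪A y, y⟫_ℂ + re ⟪B y, y⟫_ℂ := by
      rw [hTapp, inner_add_left]; exact map_add re _ _
    rw [E2, E3] at hw
    linarith [e4, hw, E1]
  -- evaluate the right-hand side
  have hxy : x - y = ((1 - r : ℝ):ℂ) • x := by
    rw [hy]
    push_cast
    rw [sub_smul, one_smul]
  have bA : re ⟪A (x - y), x - y⟫_ℂ ≤ (1 - r)^2 * (a * ‖x‖^2) := by
    rw [hxy, re_inner_smul_smul]
    have hbound : re ⟪A x, x⟫_ℂ ≤ a * ‖x‖^2 := by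
      have h5 : re ⟪A x, x⟫_ℂ ≤ ‖A x‖ * ‖x‖ := re_inner_le_norm _ _
      have h6 : ‖A x‖ ≤ a * ‖x‖ := A.le_opNorm x
      nlinarith [norm_nonneg x, h5, h6]
    nlinarith [sq_nonneg (1 - r), hbound]
  have bB : re ⟪B y, y⟫_ℂ ≤ r^2 * (b * ‖x‖^2) := by
    rw [hy, re_inner_smul_smul]
    have hbound : re ⟪B x, x⟫_ℂ ≤ b * ‖x‖^2 := by
      have h5 : re ⟪B x, x⟫_ℂ ≤ ‖B x‖ * ‖x‖ := re_inner_le_norm _ _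
      have h6 : ‖B x‖ ≤ b * ‖x‖ := B.le_opNorm x
      nlinarith [norm_nonneg x, h5, h6]
    nlinarith [sq_nonneg r, hbound]
  have harith : (1 - r)^2 * a + r^2 * b = c := by
    rw [hr, hc]
    field_simp
    ring
  have upper : re ⟪(A ∘L D ∘L B) x, x⟫_ℂ ≤ c * ‖x‖^2 := by
    have := le_trans key (add_le_add bA bB)
    nlinarith [this, harith]
  rw [abs_le]
  constructor
  · have : 0 ≤ c * ‖x‖^2 := by positivity
    linarith [hSpos, this]
  · exact upper
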